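/- Approximate covariance Bellman bound: if ‖ψ̃^π_h(s,a) − ψ^π_h(s,a)‖² ≤ ε_h(s,a) and ‖E_{s'}[δ̃_h (ψ̃^π_{h+1}(s',π_{h+1}(s')) − ψ^π_{h+1}(s',π_{h+1}(s')))ᵀ]‖ ≤ ε_h(s,a), then ‖Σ^π_h(s,a) − E_{s'}[δ̃_h δ̃_hᵀ + Σ̃^π_{h+1}(s', π_{h+1}(s'))]‖ ≤ 3 ε_h(s,a), where δ̃_h is the Bellman residual computed with the approximate successor features ψ̃ and Σ̃^π_{h+1} = Cov[Ψ^π_{h+1} − ψ̃^π_{h+1} centered at ψ̃]. -/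

import Mathlib

open Finset

noncomputable section

/-- Probability of observing the state sequence `τ` over the next `m` transitions,
starting at time `h` in `(s, a)` and following the deterministic Markov policy `π`. -/
def pathProb {S A : Type*} (P : S → A → S → ℝ) (π : ℕ → S → A) :
    (m : ℕ) → (h : ℕ) → S → A → (Fin m → S) → ℝ
  | 0, _, _, _, _ => 1
  | m + 1, h, s, a, τ =>
      P s a (τ 0) * pathProb P π m (h + 1) (τ 0) (π (h + 1) (τ 0)) (fun i => τ i.succ)

/-- The cumulative feature vector along the state sequence `τ`. -/
def featSum {S A : Type*} {d : ℕ} (φ : S → A → S → Fin d → ℝ) (π : ℕ → S → A) :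
    (m : ℕ) → (h : ℕ) → S → A → (Fin m → S) → (Fin d → ℝ)
  | 0, _, _, _, _ => 0
  | m + 1, h, s, a, τ =>
      φ s a (τ 0) + featSum φ π m (h + 1) (τ 0) (π (h + 1) (τ 0)) (fun i => τ i.succ)

/-- The successor features `ψ^π_h(s,a) = E[Ψ^π_h(s,a)]`. -/
def sf {S A : Type*} [Fintype S] {d : ℕ} (P : S → A → S → ℝ)
    (φ : S → A → S → Fin d → ℝ) (π : ℕ → S → A) (m h : ℕ) (s : S) (a : A) :
    Fin d → ℝ :=
  ∑ τ : Fin m → S, pathProb P π m h s a τ • featSum φ π m h s a τ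

/-- The second-moment matrix of the feature return `Ψ^π_h(s,a)` centered at `c`;
`c = ψ^π_h(s,a)` gives the true covariance `Σ^π_h(s,a)`, while centering at an
approximation `ψ̃` gives `Σ̃^π_h(s,a)`. -/
def sfCov {S A : Type*} [Fintype S] {d : ℕ} (P : S → A → S → ℝ)
    (φ : S → A → S → Fin d → ℝ) (π : ℕ → S → A) (m h : ℕ) (s : S) (a : A)
    (c : Fin d → ℝ) : Fin d → Fin d → ℝ :=
  fun i j => ∑ τ : Fin m → S, pathProb P π m h s a τ *
    ((featSum φ π m h s a τ i - c i) * (featSum φ π m h s a τ j - c j))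

section lemmas
variable {S A : Type*} [Fintype S] {d : ℕ} (P : S → A → S → ℝ)
  (φ : S → A → S → Fin d → ℝ) (π : ℕ → S → A)

lemma sum_pi_succ {m : ℕ} (f : (Fin (m+1) → S) → ℝ) :
    ∑ τ : Fin (m+1) → S, f τ = ∑ s' : S, ∑ τ : Fin m → S, f (Fin.cons s' τ) := by
  rw [← (Fin.consEquiv (fun _ : Fin (m+1) => S)).sum_comp f, Fintype.sum_prod_type]
  rfl

lemma pathProb_cons {m h : ℕ} (s : S) (a : A) (s' : S) (τ : Fin m → S) :
    pathProb P π (m+1) h s a (Fin.cons s' τ)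
      = P s a s' * pathProb P π m (h+1) s' (π (h+1) s') τ := by
  simp [pathProb]

lemma featSum_cons {m h : ℕ} (s : S) (a : A) (s' : S) (τ : Fin m → S) (i : Fin d) :
    featSum φ π (m+1) h s a (Fin.cons s' τ) i
      = φ s a s' i + featSum φ π m (h+1) s' (π (h+1) s') τ i := by
  simp [featSum]

lemma pathProb_sum (hP1 : ∀ s a, ∑ s', P s a s' = 1) :
    ∀ (m h : ℕ) (s : S) (a : A), ∑ τ : Fin m → S, pathProb P π m h s a τ = 1 := by
  intro m
  induction m with
  | zero => intro h s a; simp [pathProb]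
  | succ m ih =>
      intro h s a
      rw [sum_pi_succ]
      have : ∀ s' : S, ∑ τ : Fin m → S, pathProb P π (m+1) h s a (Fin.cons s' τ)
          = P s a s' := by
        intro s'
        simp only [pathProb_cons, ← Finset.mul_sum, ih]
        ring
      simp only [this, hP1]

lemma sf_apply (m h : ℕ) (s : S) (a : A) (i : Fin d) :
    sf P φ π m h s a i
      = ∑ τ : Fin m → S, pathProb P π m h s a τ * featSum φ π m h s a τ i := by
  simp [sf, Finset.sum_apply]

lemma centered_sum (m h : ℕ) (s : S) (a : A) (i : Fin d)
    (hP1 : ∀ s a, ∑ s', P s a s' = 1) :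
    ∑ τ : Fin m → S, pathProb P π m h s a τ *
      (featSum φ π m h s a τ i - sf P φ π m h s a i) = 0 := by
  simp only [mul_sub, Finset.sum_sub_distrib, ← sf_apply, ← Finset.sum_mul,
    pathProb_sum P π hP1, one_mul, sub_self]

end lemmas

section lemmas2
set_option linter.unusedSectionVars false
variable {S A : Type*} [Fintype S] {d : ℕ} (P : S → A → S → ℝ)
  (φ : S → A → S → Fin d → ℝ) (π : ℕ → S → A)
  (hP1 : ∀ s a, ∑ s', P s a s' = 1)

include hP1

/-- Shift of the centering point. -/
lemma sfCov_shift (m h : ℕ) (s : S) (a : A) (c : Fin d → ℝ) (i j : Fin d) :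
    sfCov P φ π m h s a c i j
      = sfCov P φ π m h s a (sf P φ π m h s a) i j
        + (sf P φ π m h s a i - c i) * (sf P φ π m h s a j - c j) := by
  set μ := sf P φ π m h s a with hμ
  have key : ∀ τ : Fin m → S,
      pathProb P π m h s a τ *
        ((featSum φ π m h s a τ i - c i) * (featSum φ π m h s a τ j - c j))
      = pathProb P π m h s a τ *
          ((featSum φ π m h s a τ i - μ i) * (featSum φ π m h s a τ j - μ j))
        + (pathProb P π m h s a τ * (featSum φ π m h s a τ i - μ i)) * (μ j - c j)
        + (μ i - c i) * (pathProb P π m h s a τ * (featSum φ π m h s a τ j - μ j))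
        + pathProb P π m h s a τ * ((μ i - c i) * (μ j - c j)) := by
    intro τ; ring
  simp only [sfCov, key, Finset.sum_add_distrib, ← Finset.sum_mul, ← Finset.mul_sum,
    hμ, centered_sum P φ π m h s a _ hP1, pathProb_sum P π hP1, zero_mul, mul_zero,
    add_zero, one_mul]

/-- Exact covariance Bellman equation (centered at the true mean). -/
lemma sfCov_bellman (m h : ℕ) (s : S) (a : A) (i j : Fin d) :
    sfCov P φ π (m+1) h s a (sf P φ π (m+1) h s a) i j
      = ∑ s', P s a s' *
          ((φ s a s' i + sf P φ π m (h+1) s' (π (h+1) s') i - sf P φ π (m+1) h s a i) *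
           (φ s a s' j + sf P φ π m (h+1) s' (π (h+1) s') j - sf P φ π (m+1) h s a j)
           + sfCov P φ π m (h+1) s' (π (h+1) s')
               (sf P φ π m (h+1) s' (π (h+1) s')) i j) := by
  set μ := sf P φ π (m+1) h s a with hμ
  rw [sfCov, sum_pi_succ]
  refine Finset.sum_congr rfl fun s' _ => ?_
  set μ' := sf P φ π m (h+1) s' (π (h+1) s') with hμ'
  set δi := φ s a s' i + μ' i - μ i
  set δj := φ s a s' j + μ' j - μ j
  have key : ∀ τ : Fin m → S,
      pathProb P π (m+1) h s a (Fin.cons s' τ) *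
        ((featSum φ π (m+1) h s a (Fin.cons s' τ) i - μ i) *
         (featSum φ π (m+1) h s a (Fin.cons s' τ) j - μ j))
      = P s a s' *
          (pathProb P π m (h+1) s' (π (h+1) s') τ *
             ((featSum φ π m (h+1) s' (π (h+1) s') τ i - μ' i) *
              (featSum φ π m (h+1) s' (π (h+1) s') τ j - μ' j))
           + (pathProb P π m (h+1) s' (π (h+1) s') τ *
               (featSum φ π m (h+1) s' (π (h+1) s') τ i - μ' i)) * δj
           + δi * (pathProb P π m (h+1) s' (π (h+1) s') τ *
               (featSum φ π m (h+1) s' (π (h+1) s') τ j - μ' j))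
           + pathProb P π m (h+1) s' (π (h+1) s') τ * (δi * δj)) := by
    intro τ
    rw [pathProb_cons, featSum_cons, featSum_cons]
    simp only [δi, δj]; ring
  rw [Finset.sum_congr rfl fun τ _ => key τ, ← Finset.mul_sum]
  simp only [Finset.sum_add_distrib, ← Finset.sum_mul, ← Finset.mul_sum,
    hμ', centered_sum P φ π m (h+1) s' (π (h+1) s') _ hP1, pathProb_sum P π hP1,
    zero_mul, mul_zero, add_zero, zero_add, one_mul]
  rw [sfCov]; ring

/-- Mean Bellman equation. -/
lemma sf_bellman (m h : ℕ) (s : S) (a : A) (i : Fin d) :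
    sf P φ π (m+1) h s a i
      = ∑ s', P s a s' * (φ s a s' i + sf P φ π m (h+1) s' (π (h+1) s') i) := by
  rw [sf_apply, sum_pi_succ]
  refine Finset.sum_congr rfl fun s' _ => ?_
  have key : ∀ τ : Fin m → S,
      pathProb P π (m+1) h s a (Fin.cons s' τ) *
        featSum φ π (m+1) h s a (Fin.cons s' τ) i
      = P s a s' * (pathProb P π m (h+1) s' (π (h+1) s') τ * φ s a s' i
          + pathProb P π m (h+1) s' (π (h+1) s') τ *
              featSum φ π m (h+1) s' (π (h+1) s') τ i) := by
    intro τ; rw [pathProb_cons, featSum_cons]; ring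
  rw [Finset.sum_congr rfl fun τ _ => key τ, ← Finset.mul_sum]
  simp only [Finset.sum_add_distrib, ← Finset.sum_mul, ← sf_apply,
    pathProb_sum P π hP1, one_mul]

end lemmas2

set_option maxRecDepth 10000 in
/-- **Approximate covariance Bellman bound.**  Let `N` be a matrix-compatible norm
(subadditive, absolutely homogeneous, transpose-invariant, with `N(v vᵀ) ≤ ‖v‖²` in
the Euclidean norm).  If the approximate successor features `ψ̃` satisfy
`‖ψ̃^π_h(s,a) − ψ^π_h(s,a)‖² ≤ ε` and
`N(E_{s'}[δ̃_h (ψ̃^π_{h+1}(s',π_{h+1}(s')) − ψ^π_{h+1}(s',π_{h+1}(s')))ᵀ]) ≤ ε`, where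
`δ̃_h = φ + ψ̃^π_{h+1}(s',π_{h+1}(s')) − ψ̃^π_h(s,a)`, then
`N(Σ^π_h(s,a) − E_{s'}[δ̃_h δ̃_hᵀ + Σ̃^π_{h+1}(s', π_{h+1}(s'))]) ≤ 3 ε`,
with `Σ̃^π_{h+1}` the covariance of `Ψ^π_{h+1}` centered at `ψ̃^π_{h+1}`. -/
theorem approximate_covariance_bellman {S A : Type*} [Fintype S] {d : ℕ} (T : ℕ)
    (P : S → A → S → ℝ) (hP0 : ∀ s a s', 0 ≤ P s a s') (hP1 : ∀ s a, ∑ s', P s a s' = 1)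
    (φ : S → A → S → Fin d → ℝ) (π : ℕ → S → A)
    -- a matrix-compatible norm:
    (N : (Fin d → Fin d → ℝ) → ℝ)
    (hN_add : ∀ M M', N (M + M') ≤ N M + N M')
    (hN_smul : ∀ (c : ℝ) M, N (c • M) = |c| * N M)
    (hN_outer : ∀ v : Fin d → ℝ, N (fun i j => v i * v j) ≤ ∑ i, v i ^ 2)
    (hN_transpose : ∀ M : Fin d → Fin d → ℝ, N (fun i j => M j i) = N M)
    -- approximate successor features:
    (ψt : ℕ → S → A → Fin d → ℝ)
    (h : ℕ) (hh : h ≤ T) (s : S) (a : A) (ε : ℝ)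
    -- `‖ψ̃_h(s,a) − ψ_h(s,a)‖² ≤ ε`:
    (hmean : ∑ i, (ψt h s a i - sf P φ π (T + 1 - h) h s a i) ^ 2 ≤ ε)
    -- `‖E_{s'}[δ̃_h (ψ̃_{h+1}(s',π(s')) − ψ_{h+1}(s',π(s')))ᵀ]‖ ≤ ε`:
    (hcross : N (fun i j => ∑ s', P s a s' *
        ((φ s a s' i + ψt (h + 1) s' (π (h + 1) s') i - ψt h s a i) *
         (ψt (h + 1) s' (π (h + 1) s') j - sf P φ π (T - h) (h + 1) s' (π (h + 1) s') j)))
      ≤ ε) :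
    N (fun i j =>
        sfCov P φ π (T + 1 - h) h s a (sf P φ π (T + 1 - h) h s a) i j
          - ∑ s', P s a s' *
              ((φ s a s' i + ψt (h + 1) s' (π (h + 1) s') i - ψt h s a i) *
               (φ s a s' j + ψt (h + 1) s' (π (h + 1) s') j - ψt h s a j)
               + sfCov P φ π (T - h) (h + 1) s' (π (h + 1) s')
                   (ψt (h + 1) s' (π (h + 1) s')) i j))
      ≤ 3 * ε := by
  have hm : T + 1 - h = (T - h) + 1 := by omega
  set m := T - h with hmdef
  simp only [hm] at hmean ⊢
  -- abbreviations (as plain functions, written out)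
  set C : Fin d → Fin d → ℝ := fun i j => ∑ s', P s a s' *
      ((φ s a s' i + ψt (h + 1) s' (π (h + 1) s') i - ψt h s a i) *
       (ψt (h + 1) s' (π (h + 1) s') j - sf P φ π m (h + 1) s' (π (h + 1) s') j))
    with hC
  set u : Fin d → ℝ := fun i => ψt h s a i - sf P φ π (m + 1) h s a i with hu
  have hδ0 : ∀ k, ∑ s', P s a s' *
      (φ s a s' k + sf P φ π m (h+1) s' (π (h+1) s') k - sf P φ π (m+1) h s a k) = 0 := by
    intro k
    simp only [mul_sub, Finset.sum_sub_distrib, ← Finset.sum_mul, hP1,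
      ← sf_bellman P φ π hP1 m h s a k, one_mul, sub_self]
  have hkey : (fun i j =>
        sfCov P φ π (m + 1) h s a (sf P φ π (m + 1) h s a) i j
          - ∑ s', P s a s' *
              ((φ s a s' i + ψt (h + 1) s' (π (h + 1) s') i - ψt h s a i) *
               (φ s a s' j + ψt (h + 1) s' (π (h + 1) s') j - ψt h s a j)
               + sfCov P φ π m (h + 1) s' (π (h + 1) s')
                   (ψt (h + 1) s' (π (h + 1) s')) i j))
      = (-1 : ℝ) • C + ((-1 : ℝ) • (fun i j => C j i) + (-1 : ℝ) •
          (fun i j => u i * u j)) := by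
    funext i j
    simp only [Pi.add_apply, Pi.smul_apply, smul_eq_mul, neg_one_mul, hC, hu]
    rw [sfCov_bellman P φ π hP1 m h s a i j]
    rw [← Finset.sum_sub_distrib]
    have expand : ∀ s' : S,
        P s a s' *
          ((φ s a s' i + sf P φ π m (h+1) s' (π (h+1) s') i - sf P φ π (m+1) h s a i) *
           (φ s a s' j + sf P φ π m (h+1) s' (π (h+1) s') j - sf P φ π (m+1) h s a j)
           + sfCov P φ π m (h+1) s' (π (h+1) s')
               (sf P φ π m (h+1) s' (π (h+1) s')) i j)
        - P s a s' *
          ((φ s a s' i + ψt (h + 1) s' (π (h + 1) s') i - ψt h s a i) *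
           (φ s a s' j + ψt (h + 1) s' (π (h + 1) s') j - ψt h s a j)
           + sfCov P φ π m (h+1) s' (π (h+1) s')
                (ψt (h + 1) s' (π (h + 1) s')) i j)
        = -(P s a s' *
              ((φ s a s' i + ψt (h + 1) s' (π (h + 1) s') i - ψt h s a i) *
               (ψt (h + 1) s' (π (h + 1) s') j - sf P φ π m (h + 1) s' (π (h + 1) s') j)))
          - P s a s' *
              ((φ s a s' j + ψt (h + 1) s' (π (h + 1) s') j - ψt h s a j) *
               (ψt (h + 1) s' (π (h + 1) s') i - sf P φ π m (h + 1) s' (π (h + 1) s') i))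
          + (P s a s' *
              (φ s a s' i + sf P φ π m (h+1) s' (π (h+1) s') i - sf P φ π (m+1) h s a i))
              * (ψt h s a j - sf P φ π (m+1) h s a j)
          + (ψt h s a i - sf P φ π (m+1) h s a i) *
              (P s a s' *
                (φ s a s' j + sf P φ π m (h+1) s' (π (h+1) s') j - sf P φ π (m+1) h s a j))
          - P s a s' *
              ((ψt h s a i - sf P φ π (m+1) h s a i) *
               (ψt h s a j - sf P φ π (m+1) h s a j)) := by
      intro s'
      rw [sfCov_shift P φ π hP1 m (h+1) s' (π (h+1) s') (ψt (h + 1) s' (π (h + 1) s')) i j]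
      ring
    rw [Finset.sum_congr rfl fun s' _ => expand s']
    have e3 : ∑ s' : S, (P s a s' *
          (φ s a s' i + sf P φ π m (h+1) s' (π (h+1) s') i - sf P φ π (m+1) h s a i))
          * (ψt h s a j - sf P φ π (m+1) h s a j) = 0 := by
      rw [← Finset.sum_mul, hδ0 i, zero_mul]
    have e4 : ∑ s' : S, (ψt h s a i - sf P φ π (m+1) h s a i) *
          (P s a s' *
            (φ s a s' j + sf P φ π m (h+1) s' (π (h+1) s') j - sf P φ π (m+1) h s a j))
          = 0 := by
      rw [← Finset.mul_sum, hδ0 j, mul_zero]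
    have e5 : ∑ s' : S, P s a s' *
          ((ψt h s a i - sf P φ π (m+1) h s a i) *
           (ψt h s a j - sf P φ π (m+1) h s a j))
          = (ψt h s a i - sf P φ π (m+1) h s a i) *
            (ψt h s a j - sf P φ π (m+1) h s a j) := by
      rw [← Finset.sum_mul, hP1, one_mul]
    simp only [Finset.sum_add_distrib, Finset.sum_sub_distrib, Finset.sum_neg_distrib]
    rw [e3, e4, e5]
    ring
  rw [hkey]
  have h1 : N ((-1 : ℝ) • C) = N C := by rw [hN_smul]; simp
  have h2 : N ((-1 : ℝ) • (fun i j => C j i)) = N C := by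
    rw [hN_smul, hN_transpose]; simp
  have h3 : N ((-1 : ℝ) • (fun i j => u i * u j)) ≤ ε := by
    rw [hN_smul]; simpa using le_trans (hN_outer u) hmean
  have hNC : N C ≤ ε := hcross
  calc N ((-1 : ℝ) • C + ((-1 : ℝ) • (fun i j => C j i) + (-1 : ℝ) •
          (fun i j => u i * u j)))
      ≤ N ((-1 : ℝ) • C) + N ((-1 : ℝ) • (fun i j => C j i) + (-1 : ℝ) •
          (fun i j => u i * u j)) := hN_add _ _
    _ ≤ N ((-1 : ℝ) • C) + (N ((-1 : ℝ) • (fun i j => C j i))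
          + N ((-1 : ℝ) • (fun i j => u i * u j))) := by
        gcongr; exact hN_add _ _
    _ ≤ ε + (ε + ε) := by rw [h1, h2]; gcongr
    _ = 3 * ε := by ring

end
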